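/- arXiv:1904.10314 — 7 statements merged into one kernel-verified Lean document; each statement's English description precedes it below -/
import Mathlib

section
/- Let L be a complete lattice. Let 𝒮 be the category whose objects are pairs (X, S) with X a set and S : L → Set X satisfying the sheaf-of-monomorphisms condition, and whose morphisms (X,S) → (Y,T) are functions u : X → Y such that u '' (S(a)) ⊆ T(a) for all a ∈ L. Let ℱ be the category whose objects are pairs (X, f) with f : X → L a function (fuzzy sets over L), and whose morphisms (X,f) → (Y,g) are functions u : X → Y such that f(x) ≤ g(u(x)) for all x ∈ X. Then there is an equivalence of categories 𝒮 ≃ ℱ, given on objects by (X,S) ↦ (X, ψ_S) where ψ_S(x) = sSup {c | x ∈ S(c)}, with quasi-inverse (X,f) ↦ (X, a ↦ {x | a ≤ f(x)}). (Theorem 12, Barr's theorem: the category of sheaves of monomorphisms on L₊ is equivalent to the category of fuzzy sets over L.) -/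
open CategoryTheory

universe u

/-- A sheaf of monomorphisms on Barr's augmented locale `L₊`, encoded by its
generic fibre `carrier` together with the family of subsets `S a ⊆ carrier`
(the images of the sections over `a`), satisfying the sheaf-of-monomorphisms
condition `S (sSup C) = ⋂ c ∈ C, S c`. -/
structure MonSheaf (L : Type u) [CompleteLattice L] : Type (u + 1) where
  carrier : Type u
  S : L → Set carrier
  cond : ∀ C : Set L, S (sSup C) = ⋂ c ∈ C, S c

/-- A fuzzy set over `L`: a set together with a function to `L`. -/
structure FuzzySet (L : Type u) [CompleteLattice L] : Type (u + 1) where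
  carrier : Type u
  f : carrier → L

instance monSheafCategory (L : Type u) [CompleteLattice L] :
    Category (MonSheaf L) where
  Hom A B := {u : A.carrier → B.carrier // ∀ a : L, u '' A.S a ⊆ B.S a}
  id A := ⟨id, fun a => by simp⟩
  comp {A B C} f g := ⟨g.1 ∘ f.1, fun a => by
    rw [Set.image_comp]
    exact (Set.image_mono (f := g.1) (f.2 a)).trans (g.2 a)⟩
  id_comp f := Subtype.ext rfl
  comp_id f := Subtype.ext rfl
  assoc f g h := Subtype.ext rfl

instance fuzzySetCategory (L : Type u) [CompleteLattice L] :
    Category (FuzzySet L) where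
  Hom A B := {u : A.carrier → B.carrier // ∀ x : A.carrier, A.f x ≤ B.f (u x)}
  id A := ⟨id, fun x => le_refl _⟩
  comp {A B C} f g := ⟨g.1 ∘ f.1, fun x => (f.2 x).trans (g.2 (f.1 x))⟩
  id_comp f := Subtype.ext rfl
  comp_id f := Subtype.ext rfl
  assoc f g h := Subtype.ext rfl

/-- The level-cut sheaf of monomorphisms `T(f)` associated to a fuzzy set. -/
def levelCut {L : Type u} [CompleteLattice L] (B : FuzzySet L) : MonSheaf L where
  carrier := B.carrier
  S a := {x : B.carrier | a ≤ B.f x}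
  cond C := by ext x; simp [sSup_le_iff]

section Aux

variable {L : Type u} [CompleteLattice L]

lemma MonSheaf.antitone (A : MonSheaf L) {a b : L} (h : a ≤ b) : A.S b ⊆ A.S a := by
  have : A.S (sSup {a, b}) = ⋂ c ∈ ({a, b} : Set L), A.S c := A.cond _
  rw [sSup_pair, sup_eq_right.mpr h] at this
  intro x hx
  have : x ∈ ⋂ c ∈ ({a, b} : Set L), A.S c := this ▸ hx
  simpa using (Set.mem_iInter₂.mp this a (by simp))

lemma MonSheaf.mem_psi (A : MonSheaf L) (x : A.carrier) :
    x ∈ A.S (sSup {c : L | x ∈ A.S c}) := by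
  rw [A.cond]
  exact Set.mem_iInter₂.mpr fun c hc => hc

lemma MonSheaf.mem_iff (A : MonSheaf L) (x : A.carrier) (a : L) :
    x ∈ A.S a ↔ a ≤ sSup {c : L | x ∈ A.S c} := by
  constructor
  · exact fun h => le_sSup h
  · exact fun h => A.antitone h (A.mem_psi x)

/-- Forward functor. -/
def toFuzzy (L : Type u) [CompleteLattice L] : MonSheaf L ⥤ FuzzySet L where
  obj A := ⟨A.carrier, fun x => sSup {c : L | x ∈ A.S c}⟩
  map {A B} u := ⟨u.1, fun x => by
    refine sSup_le fun c hc => le_sSup ?_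
    exact u.2 c ⟨x, hc, rfl⟩⟩
  map_id A := Subtype.ext rfl
  map_comp f g := Subtype.ext rfl

/-- Inverse functor. -/
def toSheaf (L : Type u) [CompleteLattice L] : FuzzySet L ⥤ MonSheaf L where
  obj := levelCut
  map {A B} u := ⟨u.1, fun a => by
    rintro y ⟨x, hx, rfl⟩
    exact le_trans hx (u.2 x)⟩
  map_id A := Subtype.ext rfl
  map_comp f g := Subtype.ext rfl

end Aux

/-- Theorem 12 (Barr): the category of sheaves of monomorphisms on `L₊` is
equivalent to the category of fuzzy sets over `L`, via `F ↦ ψ_F` with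
quasi-inverse the level-cut construction `f ↦ T(f)`. -/
theorem stmt_1 (L : Type u) [CompleteLattice L] :
    ∃ e : MonSheaf L ≌ FuzzySet L,
      (∀ A : MonSheaf L,
        e.functor.obj A = ⟨A.carrier, fun x => sSup {c : L | x ∈ A.S c}⟩) ∧
      (∀ B : FuzzySet L, e.inverse.obj B = levelCut B) := by
  refine ⟨CategoryTheory.Equivalence.mk (toFuzzy L) (toSheaf L) ?_ ?_, fun A => rfl, fun B => rfl⟩
  · exact NatIso.ofComponents (fun A =>
      { hom := ⟨id, fun a x hx => by
          obtain ⟨y, hy, rfl⟩ := hx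
          exact (A.mem_iff y a).mp hy⟩
        inv := ⟨id, fun a x hx => by
          obtain ⟨y, hy, rfl⟩ := hx
          exact (A.mem_iff y a).mpr hy⟩
        hom_inv_id := Subtype.ext rfl
        inv_hom_id := Subtype.ext rfl })
      (fun f => Subtype.ext rfl)
  · exact NatIso.ofComponents (fun B =>
      { hom := ⟨id, fun x => sSup_le fun c hc => hc⟩
        inv := ⟨id, fun x => le_sSup le_rfl⟩
        hom_inv_id := Subtype.ext rfl
        inv_hom_id := Subtype.ext rfl })
      (fun f => Subtype.ext rfl)
end

section
/- Let L be a complete lattice, let S : L → Set X and T : L → Set Y satisfy the sheaf-of-monomorphisms condition, and let u : X → Y be any function. Then u '' (S(a)) ⊆ T(a) for all a ∈ L if and only if ψ_S(x) ≤ ψ_T(u(x)) for all x ∈ X, where ψ_S(x) = sSup {c | x ∈ S(c)} and ψ_T(y) = sSup {c | y ∈ T(c)}. (Morphism-level correspondence of Barr's equivalence: sheaf maps correspond exactly to fuzzy set maps.) -/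
/-- Morphism-level correspondence of Barr's equivalence: sheaf maps correspond
exactly to fuzzy set maps. -/
theorem stmt_4 {L X Y : Type*} [CompleteLattice L] (S : L → Set X) (T : L → Set Y)
    (hS : ∀ C : Set L, S (sSup C) = ⋂ c ∈ C, S c)
    (hT : ∀ C : Set L, T (sSup C) = ⋂ c ∈ C, T c)
    (u : X → Y) :
    (∀ a : L, u '' S a ⊆ T a) ↔
      ∀ x : X, sSup {c : L | x ∈ S c} ≤ sSup {c : L | u x ∈ T c} := by
  have hTanti : ∀ a b : L, a ≤ b → T b ⊆ T a := by
    intro a b hab y hy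
    have : sSup {a, b} = b := by
      simp [sSup_pair, sup_eq_right.mpr hab]
    have h2 := hT {a, b}
    rw [this] at h2
    rw [h2] at hy
    exact Set.mem_iInter₂.mp hy a (by simp)
  constructor
  · intro h x
    have hx : x ∈ S (sSup {c : L | x ∈ S c}) := by
      rw [hS]; exact Set.mem_iInter₂.mpr fun c hc => hc
    have : u x ∈ T (sSup {c : L | x ∈ S c}) := h _ ⟨x, hx, rfl⟩
    exact le_sSup this
  · intro h a y hy
    obtain ⟨x, hx, rfl⟩ := hy
    have h1 : a ≤ sSup {c : L | x ∈ S c} := le_sSup hx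
    have h2 : u x ∈ T (sSup {c : L | u x ∈ T c}) := by
      rw [hT]; exact Set.mem_iInter₂.mpr fun c hc => hc
    exact hTanti _ _ (h1.trans (h x)) h2
end

section
/- Let L be a complete lattice and F : Lᵒᵖ ⥤ Type a presheaf. Define the image presheaf Im F by Im F(a) := the image of the restriction map F(a) → F(⊥), with restriction maps the inclusions Im F(b) ⊆ Im F(a) ⊆ F(⊥) for a ≤ b, and let π : F ⟶ Im F be the natural transformation given by the epi–mono factorizations. Then Im F is a presheaf of monomorphisms, and π is initial among maps from F to presheaves of monomorphisms: for every presheaf of monomorphisms G and every natural transformation α : F ⟶ G there exists a unique natural transformation β : Im F ⟶ G with β ∘ π = α. Equivalently, the image functor is left adjoint to the inclusion of presheaves of monomorphisms into all presheaves. (Lemma 26.) -/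
open CategoryTheory Opposite

universe u v

/-- The image presheaf `Im F`: `Im F(a)` is the image of the restriction map
`F(a) → F(⊥)` to the generic fibre, with restriction maps the inclusions. -/
def ImPresheaf {L : Type u} [CompleteLattice L] (F : Lᵒᵖ ⥤ Type v) :
    Lᵒᵖ ⥤ Type v where
  obj a := ↥(Set.range (F.map (homOfLE (bot_le : (⊥ : L) ≤ a.unop)).op))
  map {a b} f := TypeCat.ofHom fun x => ⟨x.1, by
    obtain ⟨y, hy⟩ := x.2
    refine ⟨F.map f y, ?_⟩
    rw [← hy, ← FunctorToTypes.map_comp_apply]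
    congr 1⟩
  map_id a := rfl
  map_comp f g := rfl

/-- The natural epi–mono factorization map `π : F ⟶ Im F`. -/
def toImPresheaf {L : Type u} [CompleteLattice L] (F : Lᵒᵖ ⥤ Type v) :
    F ⟶ ImPresheaf F where
  app a := TypeCat.ofHom fun y => ⟨F.map (homOfLE (bot_le : (⊥ : L) ≤ a.unop)).op y, ⟨y, rfl⟩⟩
  naturality a b f := by
    ext y
    apply Subtype.ext
    show F.map _ (F.map f y) = F.map _ y
    rw [← FunctorToTypes.map_comp_apply]
    congr 1

/-- Lemma 26: `Im F` is a presheaf of monomorphisms, and `π : F ⟶ Im F` is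
initial among maps from `F` to presheaves of monomorphisms; equivalently the
image functor is left adjoint to the inclusion of presheaves of monomorphisms
in all presheaves. -/
theorem stmt_11 {L : Type u} [CompleteLattice L] (F : Lᵒᵖ ⥤ Type v) :
    (∀ (a b : L) (h : a ≤ b),
      Function.Injective ((ImPresheaf F).map (homOfLE h).op)) ∧
    ∀ (G : Lᵒᵖ ⥤ Type v),
      (∀ (a b : L) (h : a ≤ b), Function.Injective (G.map (homOfLE h).op)) →
      ∀ α : F ⟶ G, ∃! β : ImPresheaf F ⟶ G, toImPresheaf F ≫ β = α := by
  constructor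
  · intro a b h x y hxy
    have := congrArg (fun z : ↥(Set.range (F.map (homOfLE (bot_le : (⊥ : L) ≤ a)).op)) => z.1) hxy
    exact Subtype.ext this
  · intro G hG α
    -- injectivity of G.map for arbitrary morphisms
    have hG' : ∀ {a b : Lᵒᵖ} (f : a ⟶ b), Function.Injective (G.map f) := by
      intro a b f
      have : f = (homOfLE (leOfHom f.unop)).op := Subsingleton.elim _ _
      rw [this]; exact hG _ _ _
    -- key determination lemma
    have key : ∀ (a : Lᵒᵖ) (y : F.obj a),
        G.map (homOfLE (bot_le : (⊥ : L) ≤ a.unop)).op (α.app a y) =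
          α.app (op ⊥) (F.map (homOfLE (bot_le : (⊥ : L) ≤ a.unop)).op y) := by
      intro a y
      exact (NatTrans.naturality_apply α (homOfLE (bot_le : (⊥ : L) ≤ a.unop)).op y).symm
    refine ⟨{ app := fun a => TypeCat.ofHom fun (x : ↥(Set.range (F.map (homOfLE (bot_le : (⊥ : L) ≤ a.unop)).op))) => α.app a x.2.choose
              naturality := ?_ }, ?_, ?_⟩
    · intro a b f
      ext x
      change ↥(Set.range (F.map (homOfLE (bot_le : (⊥ : L) ≤ a.unop)).op)) at x
      apply hG (⊥ : L) b.unop bot_le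
      change G.map _ (α.app b _) = G.map _ (G.map f (α.app a _))
      rw [key]
      have hx : F.map (homOfLE (bot_le : (⊥ : L) ≤ a.unop)).op x.2.choose = x.1 :=
        x.2.choose_spec
      have hx' : F.map (homOfLE (bot_le : (⊥ : L) ≤ b.unop)).op
          ((ImPresheaf F).map f x : ↥(Set.range (F.map (homOfLE (bot_le : (⊥ : L) ≤ b.unop)).op))).2.choose = x.1 :=
        ((ImPresheaf F).map f x : ↥(Set.range (F.map (homOfLE (bot_le : (⊥ : L) ≤ b.unop)).op))).2.choose_spec
      rw [hx']
      rw [← FunctorToTypes.map_comp_apply]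
      have : f ≫ (homOfLE (bot_le : (⊥ : L) ≤ b.unop)).op
          = (homOfLE (bot_le : (⊥ : L) ≤ a.unop)).op := Subsingleton.elim _ _
      rw [this, key, hx]
    · ext a y
      apply hG (⊥ : L) a.unop bot_le
      change G.map _ (α.app a _) = G.map _ (α.app a y)
      rw [key, key]
      exact congrArg (α.app (op ⊥)) ((toImPresheaf F).app a y : ↥(Set.range (F.map (homOfLE (bot_le : (⊥ : L) ≤ a.unop)).op))).2.choose_spec
    · intro β' hβ'
      ext a x
      change ↥(Set.range (F.map (homOfLE (bot_le : (⊥ : L) ≤ a.unop)).op)) at x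
      obtain ⟨y, hy⟩ := x.2
      have hx : x = (toImPresheaf F).app a y := Subtype.ext hy.symm
      rw [hx]
      have := ConcreteCategory.congr_hom (NatTrans.congr_app hβ' a) y
      change β'.app a ((toImPresheaf F).app a y) = α.app a y at this
      change β'.app a ((toImPresheaf F).app a y) = _
      rw [this]
      apply hG (⊥ : L) a.unop bot_le
      change G.map _ (α.app a y) = G.map _ (α.app a _)
      rw [key, key]
      exact congrArg (α.app (op ⊥)) ((toImPresheaf F).app a y : ↥(Set.range (F.map (homOfLE (bot_le : (⊥ : L) ≤ a.unop)).op))).2.choose_spec.symm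
end

section
/- Let L be a complete linear order, let S : L → Set X and T : L → Set Y satisfy the sheaf-of-monomorphisms condition, and let f : X → Y satisfy f '' (S(a)) ⊆ T(a) for all a ∈ L. Suppose f is a stalkwise epimorphism: f : X → Y is surjective (surjectivity on the generic fibre, i.e. the stalk at the adjoined initial point 0 of L₊), and for every x ∈ L with x ≠ ⊤ one has ⋃_{s > x} T(s) ⊆ f '' (⋃_{s > x} S(s)). Then f is an epimorphism of sheaves, i.e. a local epimorphism: for every a ∈ L, every u ∈ T(a), and every t < a, there exists v ∈ S(t) with f(v) = u. (Lemma 32, epimorphism part.) -/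
/-- Lemma 32, epimorphism part: a stalkwise epimorphism of sheaves of monomorphisms
on a totally ordered locale is a local epimorphism, hence an epimorphism of sheaves. -/
theorem stmt_14 {L X Y : Type*} [CompleteLinearOrder L]
    (S : L → Set X) (T : L → Set Y)
    (hS : ∀ C : Set L, S (sSup C) = ⋂ c ∈ C, S c)
    (hT : ∀ C : Set L, T (sSup C) = ⋂ c ∈ C, T c)
    (f : X → Y) (hf : ∀ a : L, f '' S a ⊆ T a)
    (hsurj : Function.Surjective f)
    (hstalk : ∀ x : L, x ≠ ⊤ →
      (⋃ s ∈ {s : L | x < s}, T s) ⊆ f '' ⋃ s ∈ {s : L | x < s}, S s) :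
    ∀ a : L, ∀ u ∈ T a, ∀ t : L, t < a → ∃ v ∈ S t, f v = u := by
  -- antitonicity of S
  have hanti : ∀ {b c : L}, b ≤ c → S c ⊆ S b := by
    intro b c hbc
    have h := hS {b, c}
    rw [sSup_pair, sup_eq_right.mpr hbc] at h
    rw [h]
    intro v hv
    simp only [Set.mem_iInter] at hv
    exact hv b (Or.inl rfl)
  intro a u hu t hta
  set Z : Set L := {b | ∃ v ∈ S b, f v = u} with hZ
  -- a ≤ sSup Z
  have hax : a ≤ sSup Z := by
    by_contra hlt
    push_neg at hlt
    set x := sSup Z with hx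
    have hxtop : x ≠ ⊤ := fun h => absurd (h ▸ hlt) (not_lt.mpr le_top)
    have huT : u ∈ ⋃ s ∈ {s : L | x < s}, T s := by
      exact Set.mem_biUnion hlt hu
    obtain ⟨v, hv, hfv⟩ := hstalk x hxtop huT
    simp only [Set.mem_iUnion] at hv
    obtain ⟨s, hs, hvS⟩ := hv
    have : s ∈ Z := ⟨v, hvS, hfv⟩
    exact absurd (le_sSup this) (not_le.mpr hs)
  have htx : t < sSup Z := lt_of_lt_of_le hta hax
  obtain ⟨b, hbZ, htb⟩ := lt_sSup_iff.mp htx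
  obtain ⟨v, hvS, hfv⟩ := hbZ
  exact ⟨v, hanti htb.le hvS, hfv⟩
end

section
/- Let L be an interval (a densely ordered complete linear order), let S : L → Set X and T : L → Set Y satisfy the sheaf-of-monomorphisms condition, and let f : X → Y satisfy f '' (S(a)) ⊆ T(a) for all a ∈ L. Suppose f is a stalkwise isomorphism: f : X → Y is a bijection (bijectivity on the generic fibre), and for every x ∈ L with x ≠ ⊤, f restricts to a bijection from ⋃_{s > x} S(s) onto ⋃_{s > x} T(s). Then f is an isomorphism of sheaves: f is bijective and f '' (S(a)) = T(a) for every a ∈ L. (Lemma 32, isomorphism part.) -/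
/-- Lemma 32, isomorphism part: a stalkwise isomorphism of sheaves of monomorphisms
on an interval is an isomorphism of sheaves. -/
theorem stmt_15 {L X Y : Type*} [CompleteLinearOrder L] [DenselyOrdered L]
    (S : L → Set X) (T : L → Set Y)
    (hS : ∀ C : Set L, S (sSup C) = ⋂ c ∈ C, S c)
    (hT : ∀ C : Set L, T (sSup C) = ⋂ c ∈ C, T c)
    (f : X → Y) (hf : ∀ a : L, f '' S a ⊆ T a)
    (hbij : Function.Bijective f)
    (hstalk : ∀ x : L, x ≠ ⊤ →
      Set.BijOn f (⋃ s ∈ {s : L | x < s}, S s) (⋃ s ∈ {s : L | x < s}, T s)) :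
    Function.Bijective f ∧ ∀ a : L, f '' S a = T a := by
  have hanti : ∀ {a b : L}, a ≤ b → S b ⊆ S a := by
    intro a b hab
    have h := hS {a, b}
    rw [sSup_pair, sup_eq_right.mpr hab] at h
    rw [h]
    intro z hz
    exact Set.mem_iInter₂.mp hz a (by simp)
  refine ⟨hbij, fun a => Set.Subset.antisymm (hf a) ?_⟩
  intro y hy
  obtain ⟨x, rfl⟩ := hbij.surjective y
  set C := {b : L | x ∈ S b} with hC
  have hm : x ∈ S (sSup C) := by
    rw [hS]
    exact Set.mem_iInter₂.mpr fun b hb => hb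
  have hle : a ≤ sSup C := by
    by_contra h
    push_neg at h
    have hne : sSup C ≠ ⊤ := ne_of_lt (lt_of_lt_of_le h le_top)
    have hst := hstalk (sSup C) hne
    have hyV : f x ∈ ⋃ s ∈ {s : L | sSup C < s}, T s :=
      Set.mem_biUnion (show a ∈ {s : L | sSup C < s} from h) hy
    obtain ⟨x', hx'U, hfx'⟩ := hst.surjOn hyV
    have hxx : x' = x := hbij.injective hfx'
    subst hxx
    obtain ⟨s, hs, hxs⟩ := Set.mem_iUnion₂.mp hx'U
    exact absurd (le_sSup (show s ∈ C from hxs)) (not_le.mpr hs)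
  exact ⟨x, hanti hle hm, rfl⟩
end

section
/- Let L be an interval (a densely ordered complete linear order) and let F : Lᵒᵖ ⥤ Type be any presheaf. For a ≠ ⊥ let LF(a) := lim_{b < a} F(b), the set of compatible families of sections over all b < a, and let η_a : F(a) → LF(a) be the canonical map sending a section to its family of restrictions. Then for every x ∈ L with x ≠ ⊤, η induces a bijection on stalks: the canonical map colim_{s > x} F(s) → colim_{s > x} LF(s) is a bijection. (Lemma 34x, part 2: the associated sheaf map η : F → L²F induces bijections F_x ≅ (L²F)_x on all stalks, where stalks of presheaves are defined by the same filtered colimit F_x = colim_{x < s} F(s) as for sheaves.) -/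
open CategoryTheory CategoryTheory.Limits Opposite

universe u

/-- The separated presheaf `LF`: `LF(a) = lim_{b < a} F(b)` is the set of
compatible families of sections over all `b < a`, with restriction maps given
by truncation of families. -/
def LFPresheaf {L : Type u} [Preorder L] (F : Lᵒᵖ ⥤ Type u) : Lᵒᵖ ⥤ Type u where
  obj a :=
    {x : ∀ b : {b : L // b < a.unop}, F.obj (op b.1) //
      ∀ (b c : {b : L // b < a.unop}) (h : c.1 ≤ b.1),
        F.map (homOfLE h).op (x b) = x c}
  map {a b} f := TypeCat.ofHom fun x =>
    ⟨fun d => x.1 ⟨d.1, lt_of_lt_of_le d.2 f.unop.le⟩,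
      fun d e h => x.2 ⟨d.1, lt_of_lt_of_le d.2 f.unop.le⟩
        ⟨e.1, lt_of_lt_of_le e.2 f.unop.le⟩ h⟩
  map_id a := rfl
  map_comp f g := rfl

/-- The canonical map `η : F ⟶ LF` sending a section to its family of
restrictions. -/
def etaLF {L : Type u} [Preorder L] (F : Lᵒᵖ ⥤ Type u) : F ⟶ LFPresheaf F where
  app a := TypeCat.ofHom fun y =>
    ⟨fun b => F.map (homOfLE b.2.le).op y, fun b c h => by
      rw [← FunctorToTypes.map_comp_apply, ← op_comp, homOfLE_comp]⟩
  naturality a b f := by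
    ext y
    apply Subtype.ext
    funext d
    show F.map _ (F.map f y) = F.map _ y
    rw [← FunctorToTypes.map_comp_apply]
    congr 1

/-- The diagram `s ↦ F(s)`, for `s > x`, whose colimit is the stalk `F_x`. -/
def stalkDiagram {L : Type u} [Preorder L] (F : Lᵒᵖ ⥤ Type u) (x : L) :
    ({s : L // x < s})ᵒᵖ ⥤ Type u :=
  (Monotone.functor (Subtype.mono_coe _)).op ⋙ F

/-- The stalk of a presheaf at `x`: the filtered colimit `F_x = colim_{x < s} F(s)`. -/
noncomputable def stalk {L : Type u} [Preorder L] (F : Lᵒᵖ ⥤ Type u) (x : L) :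
    Type u :=
  colimit (stalkDiagram F x)

/-- The map induced by `η : F ⟶ LF` on stalks at `x`. -/
noncomputable def stalkEta {L : Type u} [Preorder L] (F : Lᵒᵖ ⥤ Type u) (x : L) :
    stalk F x ⟶ stalk (LFPresheaf F) x :=
  colimMap (Functor.whiskerLeft (Monotone.functor (Subtype.mono_coe _)).op (etaLF F))

/-- Lemma 34x, part 2: on an interval, the associated sheaf map `η : F → L²F`
induces bijections on all stalks; the stalk comparison already holds for the
separated presheaf `LF`, via `F_x = colim_{x < s} F(s) ≅ colim_{x < s} LF(s)`. -/
theorem stmt_16 {L : Type u} [CompleteLinearOrder L] [DenselyOrdered L]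
    (F : Lᵒᵖ ⥤ Type u) (x : L) (hx : x ≠ ⊤) :
    Function.Bijective (stalkEta F x) := by
  haveI hne : Nonempty {s : L // x < s} := ⟨⟨⊤, lt_top_iff_ne_top.mpr hx⟩⟩
  haveI : IsFiltered ({s : L // x < s})ᵒᵖ := isFiltered_op_of_isCofiltered _
  have hmap : ∀ (j : ({s : L // x < s})ᵒᵖ) (y : (stalkDiagram F x).obj j),
      stalkEta F x (colimit.ι (stalkDiagram F x) j y) =
        colimit.ι (stalkDiagram (LFPresheaf F) x) j
          ((etaLF F).app (op j.unop.1) y) := fun j y =>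
    ConcreteCategory.congr_hom (ι_colimMap (Functor.whiskerLeft (Monotone.functor (Subtype.mono_coe _)).op (etaLF F)) j) y
  constructor
  · -- injectivity
    intro a b hab
    obtain ⟨j, y, rfl⟩ := Types.jointly_surjective' a
    obtain ⟨k, z, rfl⟩ := Types.jointly_surjective' b
    rw [show stalkEta F x = fun a => stalkEta F x a from rfl] at hab
    simp only [hmap] at hab
    obtain ⟨u, gf, gg, h⟩ := (Types.FilteredColimit.colimit_eq_iff _).mp hab
    obtain ⟨v, hxv, hvu⟩ := exists_between u.unop.2
    have hvj : v ≤ j.unop.1 := le_of_lt (lt_of_lt_of_le hvu (leOfHom gf.unop))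
    have hvk : v ≤ k.unop.1 := le_of_lt (lt_of_lt_of_le hvu (leOfHom gg.unop))
    have key : F.map (homOfLE hvj).op y = F.map (homOfLE hvk).op z := by
      have := congrArg (fun w => w.1 ⟨v, hvu⟩) h
      exact this
    have e1 := colimit.w_apply (stalkDiagram F x)
      ((homOfLE (le_of_lt (lt_of_lt_of_le hvu (leOfHom gf.unop))) :
        (⟨v, hxv⟩ : {s : L // x < s}) ⟶ j.unop)).op y
    have e2 := colimit.w_apply (stalkDiagram F x)
      ((homOfLE (le_of_lt (lt_of_lt_of_le hvu (leOfHom gg.unop))) :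
        (⟨v, hxv⟩ : {s : L // x < s}) ⟶ k.unop)).op z
    exact e1.symm.trans (Eq.trans (congrArg _ key) e2)
  · -- surjectivity
    intro a
    obtain ⟨j, f, rfl⟩ := Types.jointly_surjective' a
    obtain ⟨t, hxt, hts⟩ := exists_between j.unop.2
    refine ⟨colimit.ι (stalkDiagram F x) (op ⟨t, hxt⟩) (f.1 ⟨t, hts⟩), ?_⟩
    refine (hmap _ _).trans ?_
    have e := colimit.w_apply (stalkDiagram (LFPresheaf F) x)
      ((homOfLE (le_of_lt hts) : (⟨t, hxt⟩ : {s : L // x < s}) ⟶ j.unop)).op f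
    refine Eq.trans (congrArg _ ?_) e
    apply Subtype.ext
    funext b
    exact (f.2 ⟨t, hts⟩ ⟨b.1, lt_of_lt_of_le b.2 (le_of_lt hts)⟩ b.2.le)
end

section
/- Let L be a complete linear order. Define ω : L → Set {x : L | x ≠ ⊤} by ω(y) = {x | x < y}. Then ω is an injective frame homomorphism from L into the powerset of L \ {⊤}: ω preserves arbitrary suprema (ω(sSup S) = ⋃_{y ∈ S} ω(y) for every S ⊆ L, in particular ω(⊥) = ∅), preserves binary infima (ω(a ⊓ b) = ω(a) ∩ ω(b)) and the top element (ω(⊤) = everything), and is injective. (Example 31: for a totally ordered locale L, the Boolean localization B is the powerset 𝒫(L − {1}), the poset map ω sends y to L_{<y}, and hence the sheaf category on L has enough points.) -/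
/-- The poset map `ω : L → 𝒫(L − {⊤})`, `ω(y) = L_{<y}`, of Example 31. -/
def omegaMap {L : Type*} [CompleteLinearOrder L] (y : L) : Set {x : L // x ≠ ⊤} :=
  {x : {x : L // x ≠ ⊤} | x.1 < y}

/-- Example 31: for a totally ordered locale `L`, the map `ω : L → 𝒫(L − {1})`,
`y ↦ L_{<y}`, is an injective frame homomorphism into a complete Boolean algebra
(the powerset), so the sheaf category on `L` has enough points. -/
theorem stmt_18 {L : Type*} [CompleteLinearOrder L] :
    (∀ S : Set L, omegaMap (sSup S) = ⋃ y ∈ S, omegaMap y) ∧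
    omegaMap (⊥ : L) = (∅ : Set {x : L // x ≠ ⊤}) ∧
    (∀ a b : L, omegaMap (a ⊓ b) = omegaMap a ∩ omegaMap b) ∧
    omegaMap (⊤ : L) = (Set.univ : Set {x : L // x ≠ ⊤}) ∧
    Function.Injective (omegaMap (L := L)) := by
  refine ⟨fun S => ?_, ?_, fun a b => ?_, ?_, ?_⟩
  · ext x
    simp [omegaMap, lt_sSup_iff]
  · ext x
    simp [omegaMap]
  · ext x
    simp [omegaMap, lt_inf_iff]
  · ext x
    simp [omegaMap, lt_top_iff_ne_top, x.2]
  · intro a b h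
    by_contra hab
    rcases Ne.lt_or_gt hab with hlt | hlt
    · have ha : a ≠ ⊤ := hlt.ne_top
      have : (⟨a, ha⟩ : {x : L // x ≠ ⊤}) ∈ omegaMap b := hlt
      rw [← h] at this
      exact lt_irrefl a this
    · have hb : b ≠ ⊤ := hlt.ne_top
      have : (⟨b, hb⟩ : {x : L // x ≠ ⊤}) ∈ omegaMap a := hlt
      rw [h] at this
      exact lt_irrefl b this
end
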